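/- In the frequency-domain model of an LCMT, assume the coherence functions ω ↦ C(X i ω, X j ω) are measurable for all pairs of nodes i, j. Let a and b be distinct nodes that are not adjacent in the tree. Then there exists a node c adjacent to a such that d(a, c) ≤ d(a, b). If, in addition, h m ω ≠ 0 for every node m ≠ r and every ω, then there exists a node c adjacent to a with d(a, c) < d(a, b). -/

import Mathlib

open scoped InnerProductSpace

/-- The coherence of two vectors of a complex inner product space
(inner product conjugate-linear in the first argument):
`C(u, v) = ‖⟪u, v⟫‖² / (‖u‖² · ‖v‖²)`. -/
noncomputable def coherence {H : Type*} [NormedAddCommGroup H]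
    [InnerProductSpace ℂ H] (u v : H) : ℝ :=
  ‖⟪u, v⟫_ℂ‖ ^ 2 / (‖u‖ ^ 2 * ‖v‖ ^ 2)

/-- The coherence-based distance between two frequency-indexed families of
vectors: `d(f, g) = ( (1/(2π)) ∫_{-π}^{π} (1 − C(f ω, g ω)) dω )^{1/2}`. -/
noncomputable def cohDist {H : Type*} [NormedAddCommGroup H]
    [InnerProductSpace ℂ H] (f g : ℝ → H) : ℝ :=
  Real.sqrt ((1 / (2 * Real.pi)) *
    ∫ ω in (-Real.pi)..Real.pi, (1 - coherence (f ω) (g ω)))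

/- ------------------------------------------------------------------ -/
/- Auxiliary material for the proof of the incident node theorem.      -/
/- ------------------------------------------------------------------ -/

section CoherenceBasic

variable {H : Type*} [NormedAddCommGroup H] [InnerProductSpace ℂ H]

lemma coherence_nonneg (u v : H) : 0 ≤ coherence u v := by
  unfold coherence; positivity

lemma coherence_le_one (u v : H) : coherence u v ≤ 1 := by
  unfold coherence
  apply div_le_one_of_le₀
  · calc ‖⟪u, v⟫_ℂ‖ ^ 2 ≤ (‖u‖ * ‖v‖) ^ 2 := by
          have := norm_inner_le_norm (𝕜 := ℂ) u v
          have h0 : (0:ℝ) ≤ ‖⟪u, v⟫_ℂ‖ := norm_nonneg _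
          nlinarith
    _ = ‖u‖ ^ 2 * ‖v‖ ^ 2 := by ring
  · positivity

lemma coherence_pos {u v : H} (hu : u ≠ 0) (hv : v ≠ 0)
    (hne : ⟪u, v⟫_ℂ ≠ 0) : 0 < coherence u v := by
  unfold coherence
  apply div_pos
  · exact pow_pos (norm_pos_iff.mpr hne) 2
  · exact mul_pos (pow_pos (norm_pos_iff.mpr hu) 2) (pow_pos (norm_pos_iff.mpr hv) 2)

lemma coherence_lt_one {u v : H} (hu : u ≠ 0) (hv : v ≠ 0)
    (hnp : ∀ t : ℂ, t ≠ 0 → v ≠ t • u) : coherence u v < 1 := by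
  have hcs : ‖⟪u, v⟫_ℂ‖ < ‖u‖ * ‖v‖ := by
    refine lt_of_le_of_ne (norm_inner_le_norm u v) (fun he => ?_)
    obtain ⟨t, ht, hvt⟩ := (norm_inner_eq_norm_iff hu hv).1 he
    exact hnp t ht hvt
  unfold coherence
  rw [div_lt_one (by
    exact mul_pos (pow_pos (norm_pos_iff.mpr hu) 2) (pow_pos (norm_pos_iff.mpr hv) 2))]
  have h0 : (0:ℝ) ≤ ‖⟪u, v⟫_ℂ‖ := norm_nonneg _
  nlinarith

/-- Factorization shape used when the decomposed vector is `B` (descendant case):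
`B = G • Cv + R` with `R ⊥ Cv` and `R ⊥ A`. -/
lemma coherence_case2 {A Cv B : H} (hA : A ≠ 0) (hC : Cv ≠ 0) (hB : B ≠ 0)
    (G : ℂ) (R : H) (hBdef : B = G • Cv + R)
    (hRC : ⟪R, Cv⟫_ℂ = 0) (hRA : ⟪R, A⟫_ℂ = 0) :
    coherence A B ≤ coherence A Cv ∧
    (R ≠ 0 → ⟪A, Cv⟫_ℂ ≠ 0 → coherence A B < coherence A Cv) := by
  have hAB : ⟪A, B⟫_ℂ = G * ⟪A, Cv⟫_ℂ := by
    rw [hBdef, inner_add_right, inner_smul_right, ← inner_conj_symm A R, hRA,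
      map_zero, add_zero]
  have hGC : ⟪G • Cv, R⟫_ℂ = 0 := by
    rw [inner_smul_left, ← inner_conj_symm Cv R, hRC, map_zero, mul_zero]
  have hnB : ‖B‖ ^ 2 = ‖G‖ ^ 2 * ‖Cv‖ ^ 2 + ‖R‖ ^ 2 := by
    have hh := norm_add_sq_eq_norm_sq_add_norm_sq_of_inner_eq_zero (G • Cv) R hGC
    rw [norm_smul] at hh
    rw [hBdef, sq, hh]
    ring
  have hA2 : (0:ℝ) < ‖A‖ ^ 2 := pow_pos (norm_pos_iff.mpr hA) 2
  have hC2 : (0:ℝ) < ‖Cv‖ ^ 2 := pow_pos (norm_pos_iff.mpr hC) 2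
  have hB2 : (0:ℝ) < ‖B‖ ^ 2 := pow_pos (norm_pos_iff.mpr hB) 2
  have hBB : (0:ℝ) < ‖G‖ ^ 2 * ‖Cv‖ ^ 2 + ‖R‖ ^ 2 := by rw [← hnB]; exact hB2
  have e1 : coherence A B =
      (‖G‖ ^ 2 * ‖⟪A, Cv⟫_ℂ‖ ^ 2) /
        (‖A‖ ^ 2 * (‖G‖ ^ 2 * ‖Cv‖ ^ 2 + ‖R‖ ^ 2)) := by
    rw [coherence, hAB, hnB, norm_mul, mul_pow]
  have e2 : coherence A Cv = ‖⟪A, Cv⟫_ℂ‖ ^ 2 / (‖A‖ ^ 2 * ‖Cv‖ ^ 2) := rfl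
  have hx : (0:ℝ) ≤ ‖⟪A, Cv⟫_ℂ‖ ^ 2 := by positivity
  have hR2 : (0:ℝ) ≤ ‖R‖ ^ 2 := by positivity
  have hG2 : (0:ℝ) ≤ ‖G‖ ^ 2 := by positivity
  constructor
  · rw [e1, e2, div_le_div_iff₀ (by positivity) (by positivity)]
    nlinarith [mul_nonneg (mul_nonneg hx hA2.le) hR2]
  · intro hR0 hAC0
    have hxpos : (0:ℝ) < ‖⟪A, Cv⟫_ℂ‖ ^ 2 := pow_pos (norm_pos_iff.mpr hAC0) 2
    have hRpos : (0:ℝ) < ‖R‖ ^ 2 := pow_pos (norm_pos_iff.mpr hR0) 2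
    rw [e1, e2, div_lt_div_iff₀ (by positivity) (by positivity)]
    nlinarith [mul_pos (mul_pos hxpos hA2) hRpos]

/-- Factorization shape used when the decomposed vector is `A`:
`A = t • Cv + s` with `s ⊥ Cv` and `s ⊥ B`.  Then the coherence factorizes:
`C(A,B) = C(A,Cv) · C(Cv,B)`. -/
lemma coherence_case1 {A Cv B : H} (hA : A ≠ 0) (hC : Cv ≠ 0) (hB : B ≠ 0)
    (t : ℂ) (s : H) (hAdef : A = t • Cv + s)
    (hsC : ⟪s, Cv⟫_ℂ = 0) (hsB : ⟪s, B⟫_ℂ = 0) :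
    coherence A B ≤ coherence A Cv ∧
    (t ≠ 0 → coherence Cv B < 1 → coherence A B < coherence A Cv) := by
  have hAB : ⟪A, B⟫_ℂ = (starRingEnd ℂ) t * ⟪Cv, B⟫_ℂ := by
    rw [hAdef, inner_add_left, inner_smul_left, hsB, add_zero]
  have hAC : ⟪A, Cv⟫_ℂ = (starRingEnd ℂ) t * ((‖Cv‖ : ℂ) ^ 2) := by
    rw [hAdef, inner_add_left, inner_smul_left, hsC, add_zero,
      inner_self_eq_norm_sq_to_K]
    norm_cast
  have hA2 : (0:ℝ) < ‖A‖ ^ 2 := pow_pos (norm_pos_iff.mpr hA) 2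
  have hC2 : (0:ℝ) < ‖Cv‖ ^ 2 := pow_pos (norm_pos_iff.mpr hC) 2
  have hB2 : (0:ℝ) < ‖B‖ ^ 2 := pow_pos (norm_pos_iff.mpr hB) 2
  have hnormsq : ‖((‖Cv‖ : ℂ) ^ 2)‖ = ‖Cv‖ ^ 2 := by
    rw [norm_pow, Complex.norm_real, norm_norm]
  have key : coherence A B = coherence A Cv * coherence Cv B := by
    rw [coherence, coherence, coherence, hAB, hAC, norm_mul, norm_mul,
      RCLike.norm_conj, hnormsq, mul_pow, mul_pow]
    field_simp
  refine ⟨?_, ?_⟩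
  · rw [key]
    exact mul_le_of_le_one_right (coherence_nonneg _ _) (coherence_le_one _ _)
  · intro ht hlt
    have hACne : ⟪A, Cv⟫_ℂ ≠ 0 := by
      rw [hAC]
      apply mul_ne_zero
      · simpa using ht
      · intro h0
        rw [pow_eq_zero_iff (by norm_num), Complex.ofReal_eq_zero, norm_eq_zero] at h0
        exact hC h0
    have hpos : 0 < coherence A Cv := coherence_pos hA hC hACne
    rw [key]
    exact mul_lt_of_lt_one_right hpos hlt

end CoherenceBasic

section TreeBasic

variable {V : Type*}

/-- `i` is a weak ancestor of `j` (including `i = j`). -/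
def LCMTAnc (par : V → V) (i j : V) : Prop := ∃ n, par^[n] j = i

/-- Depth of a node: least number of parent steps to the root. -/
noncomputable def LCMTdep (r : V) (par : V → V) (j : V) : ℕ :=
  sInf {n | par^[n] j = r}

variable {r : V} {par : V → V}

lemma LCMTdep_spec (hreach : ∀ j, ∃ n, par^[n] j = r) (j : V) :
    par^[LCMTdep r par j] j = r :=
  Nat.sInf_mem (hreach j)

lemma LCMTdep_par_lt (hreach : ∀ j, ∃ n, par^[n] j = r) {j : V} (hj : j ≠ r) :
    LCMTdep r par (par j) < LCMTdep r par j := by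
  have h0 : LCMTdep r par j ≠ 0 := by
    intro h0
    have hs := LCMTdep_spec hreach j
    rw [h0] at hs
    exact hj hs
  have h1 : par^[LCMTdep r par j - 1] (par j) = r := by
    have hs := LCMTdep_spec hreach j
    have he : LCMTdep r par j - 1 + 1 = LCMTdep r par j := by omega
    rw [← he, Function.iterate_succ_apply] at hs
    exact hs
  have h2 := Nat.sInf_le
    (show LCMTdep r par j - 1 ∈ {n | par^[n] (par j) = r} from h1)
  have h3 : LCMTdep r par (par j) ≤ LCMTdep r par j - 1 := h2
  omega

lemma LCMTdep_par_le (hroot : par r = r) (hreach : ∀ j, ∃ n, par^[n] j = r)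
    (j : V) : LCMTdep r par (par j) ≤ LCMTdep r par j := by
  by_cases hj : j = r
  · subst hj; rw [hroot]
  · exact (LCMTdep_par_lt hreach hj).le

lemma LCMTdep_iter_le (hroot : par r = r) (hreach : ∀ j, ∃ n, par^[n] j = r)
    (n : ℕ) (j : V) : LCMTdep r par (par^[n] j) ≤ LCMTdep r par j := by
  induction n with
  | zero => simp
  | succ n ih =>
      rw [Function.iterate_succ_apply']
      exact (LCMTdep_par_le hroot hreach _).trans ih

lemma LCMT_iterate_ne (hroot : par r = r) (hreach : ∀ j, ∃ n, par^[n] j = r)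
    {j : V} (hj : j ≠ r) {n : ℕ} (hn : n ≠ 0) : par^[n] j ≠ j := by
  intro he
  obtain ⟨m, rfl⟩ : ∃ m, n = m + 1 := ⟨n - 1, by omega⟩
  have h2 : LCMTdep r par (par^[m + 1] j) < LCMTdep r par j := by
    calc LCMTdep r par (par^[m + 1] j)
        = LCMTdep r par (par^[m] (par j)) := by rw [Function.iterate_succ_apply]
      _ ≤ LCMTdep r par (par j) := LCMTdep_iter_le hroot hreach m (par j)
      _ < LCMTdep r par j := LCMTdep_par_lt hreach hj
  rw [he] at h2
  omega

lemma LCMTAnc_dep_lt (hroot : par r = r) (hreach : ∀ j, ∃ n, par^[n] j = r)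
    {i j : V} (hij : i ≠ j) (ha : LCMTAnc par i j) :
    LCMTdep r par i < LCMTdep r par j := by
  obtain ⟨n, hn⟩ := ha
  subst hn
  have hn0 : n ≠ 0 := by rintro rfl; exact hij rfl
  have hj : j ≠ r := by
    rintro rfl
    rw [Function.iterate_fixed hroot] at hij
    exact hij rfl
  obtain ⟨m, rfl⟩ : ∃ m, n = m + 1 := ⟨n - 1, by omega⟩
  calc LCMTdep r par (par^[m + 1] j)
      = LCMTdep r par (par^[m] (par j)) := by rw [Function.iterate_succ_apply]
    _ ≤ LCMTdep r par (par j) := LCMTdep_iter_le hroot hreach m (par j)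
    _ < LCMTdep r par j := LCMTdep_par_lt hreach hj

lemma LCMTAnc_antisymm (hroot : par r = r) (hreach : ∀ j, ∃ n, par^[n] j = r)
    {i j : V} (h1 : LCMTAnc par i j) (h2 : LCMTAnc par j i) : i = j := by
  by_contra hij
  have l1 := LCMTAnc_dep_lt hroot hreach hij h1
  have l2 := LCMTAnc_dep_lt hroot hreach (Ne.symm hij) h2
  omega

end TreeBasic

section ModelBasic

variable {H : Type*} [NormedAddCommGroup H] [InnerProductSpace ℂ H]
variable {V : Type*} {r : V} {par : V → V}
variable {h : V → ℝ → ℂ} {ρ : V → ℝ → H} {X : V → ℝ → H}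

/-- The noise at a node is orthogonal to the signal of any node of which it is
not a weak ancestor. -/
lemma LCMT_rho_orth
    (hroot : par r = r) (hreach : ∀ j, ∃ n, par^[n] j = r)
    (horth : ∀ (ω : ℝ) (a b : V), a ≠ b → ⟪ρ a ω, ρ b ω⟫_ℂ = 0)
    (hXr : ∀ ω, X r ω = ρ r ω)
    (hX : ∀ j, j ≠ r → ∀ ω, X j ω = h j ω • X (par j) ω + ρ j ω) :
    ∀ (j i : V) (ω : ℝ), ¬ LCMTAnc par i j → ⟪ρ i ω, X j ω⟫_ℂ = 0 := by
  suffices HH : ∀ (N : ℕ) (j : V), LCMTdep r par j ≤ N →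
      ∀ (i : V) (ω : ℝ), ¬ LCMTAnc par i j → ⟪ρ i ω, X j ω⟫_ℂ = 0 by
    intro j i ω hij
    exact HH (LCMTdep r par j) j le_rfl i ω hij
  intro N
  induction N with
  | zero =>
      intro j hdep i ω hij
      have hj : j = r := by
        have hs := LCMTdep_spec hreach j
        rw [Nat.le_zero.mp hdep] at hs
        exact hs.symm ▸ rfl
      subst hj
      rw [hXr]
      exact horth ω i j (by rintro rfl; exact hij ⟨0, rfl⟩)
  | succ N ih =>
      intro j hdep i ω hij
      by_cases hj : j = r
      · subst hj
        rw [hXr]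
        exact horth ω i j (by rintro rfl; exact hij ⟨0, rfl⟩)
      · rw [hX j hj ω, inner_add_right, inner_smul_right]
        have hanc : ¬ LCMTAnc par i (par j) := by
          rintro ⟨s, hs⟩
          exact hij ⟨s + 1, by rw [Function.iterate_succ_apply]; exact hs⟩
        have hdep' : LCMTdep r par (par j) ≤ N := by
          have := LCMTdep_par_lt hreach hj
          omega
        rw [ih (par j) hdep' i ω hanc, mul_zero, zero_add]
        exact horth ω i j (by rintro rfl; exact hij ⟨0, rfl⟩)

lemma LCMT_rho_self
    (hroot : par r = r) (hreach : ∀ j, ∃ n, par^[n] j = r)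
    (horth : ∀ (ω : ℝ) (a b : V), a ≠ b → ⟪ρ a ω, ρ b ω⟫_ℂ = 0)
    (hXr : ∀ ω, X r ω = ρ r ω)
    (hX : ∀ j, j ≠ r → ∀ ω, X j ω = h j ω • X (par j) ω + ρ j ω)
    (j : V) (ω : ℝ) : ⟪ρ j ω, X j ω⟫_ℂ = (‖ρ j ω‖ : ℂ) ^ 2 := by
  by_cases hj : j = r
  · subst hj
    rw [hXr, inner_self_eq_norm_sq_to_K]
    norm_cast
  · rw [hX j hj ω, inner_add_right, inner_smul_right,
      LCMT_rho_orth hroot hreach horth hXr hX (par j) j ω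
        (by
          rintro ⟨s, hs⟩
          exact LCMT_iterate_ne hroot hreach hj (n := s + 1) (by omega)
            (by rw [Function.iterate_succ_apply]; exact hs)),
      mul_zero, zero_add, inner_self_eq_norm_sq_to_K]
    norm_cast

lemma LCMT_X_ne
    (hroot : par r = r) (hreach : ∀ j, ∃ n, par^[n] j = r)
    (horth : ∀ (ω : ℝ) (a b : V), a ≠ b → ⟪ρ a ω, ρ b ω⟫_ℂ = 0)
    (hwp : ∀ (j : V) (ω : ℝ), ρ j ω ≠ 0)
    (hXr : ∀ ω, X r ω = ρ r ω)
    (hX : ∀ j, j ≠ r → ∀ ω, X j ω = h j ω • X (par j) ω + ρ j ω)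
    (j : V) (ω : ℝ) : X j ω ≠ 0 := by
  intro h0
  have hs := LCMT_rho_self hroot hreach horth hXr hX j ω
  rw [h0, inner_zero_right] at hs
  have : (‖ρ j ω‖ : ℂ) = 0 := by
    have := hs.symm
    rwa [pow_eq_zero_iff (by norm_num)] at this
  rw [Complex.ofReal_eq_zero, norm_eq_zero] at this
  exact hwp j ω this

/-- Decomposition of the signal at a node along the chain of its ancestors. -/
lemma LCMT_decomp
    (hroot : par r = r) (hreach : ∀ j, ∃ n, par^[n] j = r)
    (horth : ∀ (ω : ℝ) (a b : V), a ≠ b → ⟪ρ a ω, ρ b ω⟫_ℂ = 0)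
    (hwp : ∀ (j : V) (ω : ℝ), ρ j ω ≠ 0)
    (hXr : ∀ ω, X r ω = ρ r ω)
    (hX : ∀ j, j ≠ r → ∀ ω, X j ω = h j ω • X (par j) ω + ρ j ω) :
    ∀ (n : ℕ) (j : V), (∀ i, i < n → par^[i] j ≠ r) → ∀ ω : ℝ,
      ∃ (G : ℂ) (R : H),
        X j ω = G • X (par^[n] j) ω + R ∧
        (∀ m, LCMTAnc par m (par^[n] j) → ⟪R, X m ω⟫_ℂ = 0) ∧
        (∀ i, ¬ LCMTAnc par i j → ⟪ρ i ω, R⟫_ℂ = 0) ∧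
        (n ≠ 0 → R ≠ 0) := by
  intro n
  induction n with
  | zero =>
      intro j _ ω
      exact ⟨1, 0, by simp, by simp, by simp, by simp⟩
  | succ n ih =>
      intro j hint ω
      have hj : j ≠ r := by simpa using hint 0 (Nat.succ_pos n)
      obtain ⟨G', R', hde, hXm, hρR, _⟩ :=
        ih (par j) (fun i hi => by
          have := hint (i + 1) (by omega)
          rwa [Function.iterate_succ_apply] at this) ω
      have hρjR' : ⟪ρ j ω, R'⟫_ℂ = 0 := by
        apply hρR
        rintro ⟨s, hs⟩
        exact LCMT_iterate_ne hroot hreach hj (n := s + 1) (by omega)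
          (by rw [Function.iterate_succ_apply]; exact hs)
      refine ⟨h j ω * G', h j ω • R' + ρ j ω, ?_, ?_, ?_, ?_⟩
      · rw [Function.iterate_succ_apply, hX j hj ω, hde, smul_add, smul_smul,
          add_assoc]
      · intro m hm
        rw [Function.iterate_succ_apply] at hm
        rw [inner_add_left, inner_smul_left, hXm m hm, mul_zero, zero_add]
        apply LCMT_rho_orth hroot hreach horth hXr hX m j ω
        rintro ⟨s, hs⟩
        obtain ⟨t, ht⟩ := hm
        apply LCMT_iterate_ne hroot hreach hj (n := s + t + n + 1) (by omega)
        calc par^[s + t + n + 1] j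
            = par^[s] (par^[t] (par^[n] (par^[1] j))) := by
              rw [← Function.iterate_add_apply, ← Function.iterate_add_apply,
                ← Function.iterate_add_apply]
          _ = par^[s] (par^[t] (par^[n] (par j))) := by
              rw [Function.iterate_one]
          _ = par^[s] m := by rw [ht]
          _ = j := hs
      · intro i hij
        have hi_par : ¬ LCMTAnc par i (par j) := by
          rintro ⟨s, hs⟩
          exact hij ⟨s + 1, by rw [Function.iterate_succ_apply]; exact hs⟩
        rw [inner_add_right, inner_smul_right, hρR i hi_par, mul_zero, zero_add]
        exact horth ω i j (by rintro rfl; exact hij ⟨0, rfl⟩)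
      · intro _ hR0
        have h1 : ⟪ρ j ω, h j ω • R' + ρ j ω⟫_ℂ = (‖ρ j ω‖ : ℂ) ^ 2 := by
          rw [inner_add_right, inner_smul_right, hρjR', mul_zero, zero_add,
            inner_self_eq_norm_sq_to_K]
          norm_cast
        rw [hR0, inner_zero_right] at h1
        have : (‖ρ j ω‖ : ℂ) = 0 := by
          have := h1.symm
          rwa [pow_eq_zero_iff (by norm_num)] at this
        rw [Complex.ofReal_eq_zero, norm_eq_zero] at this
        exact hwp j ω this

/-- Two signals at distinct nodes are never proportional, so their coherence
is strictly less than one. -/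
lemma LCMT_coh_lt_one
    (hroot : par r = r) (hreach : ∀ j, ∃ n, par^[n] j = r)
    (horth : ∀ (ω : ℝ) (a b : V), a ≠ b → ⟪ρ a ω, ρ b ω⟫_ℂ = 0)
    (hwp : ∀ (j : V) (ω : ℝ), ρ j ω ≠ 0)
    (hXr : ∀ ω, X r ω = ρ r ω)
    (hX : ∀ j, j ≠ r → ∀ ω, X j ω = h j ω • X (par j) ω + ρ j ω)
    (i j : V) (hij : i ≠ j) (ω : ℝ) :
    coherence (X i ω) (X j ω) < 1 := by
  have hXi := LCMT_X_ne hroot hreach horth hwp hXr hX i ω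
  have hXj := LCMT_X_ne hroot hreach horth hwp hXr hX j ω
  apply coherence_lt_one hXi hXj
  intro t ht he
  have hρ_self_i := LCMT_rho_self hroot hreach horth hXr hX i ω
  have hρ_self_j := LCMT_rho_self hroot hreach horth hXr hX j ω
  have hρi_ne : (‖ρ i ω‖ : ℂ) ^ 2 ≠ 0 := by
    simp only [ne_eq, pow_eq_zero_iff, Complex.ofReal_eq_zero, norm_eq_zero]
    exact fun hc => hwp i ω (by simpa using hc)
  have hρj_ne : (‖ρ j ω‖ : ℂ) ^ 2 ≠ 0 := by
    simp only [ne_eq, pow_eq_zero_iff, Complex.ofReal_eq_zero, norm_eq_zero]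
    exact fun hc => hwp j ω (by simpa using hc)
  -- `⟪ρ j, X i⟫ ≠ 0`, hence `j` is a weak ancestor of `i`.
  have h1 : ⟪ρ j ω, X i ω⟫_ℂ ≠ 0 := by
    intro h0
    have : ⟪ρ j ω, X j ω⟫_ℂ = 0 := by rw [he, inner_smul_right, h0, mul_zero]
    rw [hρ_self_j] at this
    exact hρj_ne this
  have ha1 : LCMTAnc par j i := by
    by_contra hn
    exact h1 (LCMT_rho_orth hroot hreach horth hXr hX i j ω hn)
  -- `⟪ρ i, X j⟫ ≠ 0`, hence `i` is a weak ancestor of `j`.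
  have h2 : ⟪ρ i ω, X j ω⟫_ℂ ≠ 0 := by
    rw [he, inner_smul_right, hρ_self_i]
    exact mul_ne_zero ht hρi_ne
  have ha2 : LCMTAnc par i j := by
    by_contra hn
    exact h2 (LCMT_rho_orth hroot hreach horth hXr hX j i ω hn)
  exact hij (LCMTAnc_antisymm hroot hreach ha2 ha1)

/-- Core combinatorial/pointwise step: choice of the neighbor `c` of `a`
realizing the pointwise coherence comparison. -/
lemma LCMT_exists_c
    (hroot : par r = r) (hpar : ∀ j, j ≠ r → par j ≠ j)
    (hreach : ∀ j, ∃ n, par^[n] j = r)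
    (horth : ∀ (ω : ℝ) (a b : V), a ≠ b → ⟪ρ a ω, ρ b ω⟫_ℂ = 0)
    (hwp : ∀ (j : V) (ω : ℝ), ρ j ω ≠ 0)
    (hXr : ∀ ω, X r ω = ρ r ω)
    (hX : ∀ j, j ≠ r → ∀ ω, X j ω = h j ω • X (par j) ω + ρ j ω)
    (a b : V) (hab : a ≠ b)
    (hnotadj : ¬ (par a = b ∨ par b = a)) :
    ∃ c : V, c ≠ a ∧ (par a = c ∨ par c = a) ∧
      (∀ ω, coherence (X a ω) (X b ω) ≤ coherence (X a ω) (X c ω)) ∧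
      ((∀ (m : V) (ω' : ℝ), m ≠ r → h m ω' ≠ 0) →
        ∀ ω, coherence (X a ω) (X b ω) < coherence (X a ω) (X c ω)) := by
  have hXne := LCMT_X_ne hroot hreach horth hwp hXr hX
  by_cases hanc : LCMTAnc par a b
  · -- `a` is a (strict) ancestor of `b`; take `c` the child of `a` towards `b`.
    set k : ℕ := sInf {n | par^[n] b = a} with hk_def
    have hk : par^[k] b = a := Nat.sInf_mem hanc
    have hk0 : k ≠ 0 := by
      intro h0; rw [h0] at hk; exact hab hk.symm
    have hk1 : k ≠ 1 := by
      intro h1; rw [h1] at hk; exact hnotadj (Or.inr (by simpa using hk))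
    set c : V := par^[k - 1] b with hc_def
    have hpc : par c = a := by
      have he : k - 1 + 1 = k := by omega
      rw [hc_def, ← Function.iterate_succ_apply' par (k - 1) b,
        Nat.succ_eq_add_one, he]
      exact hk
    have hca : c ≠ a := by
      intro hca
      have : k ≤ k - 1 := Nat.sInf_le hca
      omega
    have hcr : c ≠ r := by
      intro hcr
      apply hca
      rw [← hpc, hcr, hroot, ← hcr]
    have hint : ∀ i, i < k - 1 → par^[i] b ≠ r := by
      intro i hi he
      apply hcr
      rw [hc_def]
      have : k - 1 = (k - 1 - i) + i := by omega
      rw [this, Function.iterate_add_apply, he, Function.iterate_fixed hroot]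
    have hanc_ac : LCMTAnc par a c := ⟨1, by simpa using hpc⟩
    have hanc_cc : LCMTAnc par c c := ⟨0, rfl⟩
    have hnot_ca : ¬ LCMTAnc par c a := by
      rintro ⟨s, hs⟩
      apply LCMT_iterate_ne hroot hreach hcr (n := s + 1) (by omega)
      rw [Function.iterate_succ_apply, hpc]
      exact hs
    refine ⟨c, hca, Or.inr hpc, ?_, ?_⟩
    · -- weak inequality, holds pointwise
      intro ω
      obtain ⟨G, R, hBdef, hXm, _, hRne⟩ :=
        LCMT_decomp hroot hreach horth hwp hXr hX (k - 1) b hint ω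
      exact (coherence_case2 (hXne a ω) (hXne c ω) (hXne b ω) G R hBdef
        (hXm c hanc_cc) (hXm a hanc_ac)).1
    · -- strict inequality under nondegeneracy
      intro hnd ω
      obtain ⟨G, R, hBdef, hXm, _, hRne⟩ :=
        LCMT_decomp hroot hreach horth hwp hXr hX (k - 1) b hint ω
      refine (coherence_case2 (hXne a ω) (hXne c ω) (hXne b ω) G R hBdef
        (hXm c hanc_cc) (hXm a hanc_ac)).2 (hRne (by omega)) ?_
      -- `⟪X a, X c⟫ = h c ω * ‖X a‖² ≠ 0`
      have hXc : X c ω = h c ω • X a ω + ρ c ω := by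
        have := hX c hcr ω
        rwa [hpc] at this
      have horthca : ⟪X a ω, ρ c ω⟫_ℂ = 0 := by
        rw [← inner_conj_symm (X a ω) (ρ c ω),
          LCMT_rho_orth hroot hreach horth hXr hX a c ω hnot_ca, map_zero]
      have : ⟪X a ω, X c ω⟫_ℂ = h c ω * (‖X a ω‖ : ℂ) ^ 2 := by
        rw [hXc, inner_add_right, inner_smul_right, horthca, add_zero,
          inner_self_eq_norm_sq_to_K]
        norm_cast
      rw [this]
      apply mul_ne_zero (hnd c ω hcr)
      simp only [ne_eq, pow_eq_zero_iff, Complex.ofReal_eq_zero, norm_eq_zero]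
      exact fun hc0 => hXne a ω (by simpa using hc0)
  · -- `a` is not an ancestor of `b`: take `c = par a`.
    have har : a ≠ r := by
      rintro rfl
      exact hanc (hreach b)
    set c : V := par a with hc_def
    have hca : c ≠ a := hpar a har
    have hcb : c ≠ b := fun he => hnotadj (Or.inl he)
    have hnot_ac : ¬ LCMTAnc par a c := by
      rintro ⟨s, hs⟩
      exact LCMT_iterate_ne hroot hreach har (n := s + 1) (by omega)
        (by rw [Function.iterate_succ_apply]; exact hs)
    have hAdef : ∀ ω, X a ω = h a ω • X c ω + ρ a ω := fun ω => hX a har ω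
    have hsC : ∀ ω, ⟪ρ a ω, X c ω⟫_ℂ = 0 := fun ω =>
      LCMT_rho_orth hroot hreach horth hXr hX c a ω hnot_ac
    have hsB : ∀ ω, ⟪ρ a ω, X b ω⟫_ℂ = 0 := fun ω =>
      LCMT_rho_orth hroot hreach horth hXr hX b a ω hanc
    refine ⟨c, hca, Or.inl rfl, ?_, ?_⟩
    · intro ω
      exact (coherence_case1 (hXne a ω) (hXne c ω) (hXne b ω) (h a ω) (ρ a ω)
        (hAdef ω) (hsC ω) (hsB ω)).1
    · intro hnd ω
      exact (coherence_case1 (hXne a ω) (hXne c ω) (hXne b ω) (h a ω) (ρ a ω)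
        (hAdef ω) (hsC ω) (hsB ω)).2 (hnd a ω har)
        (LCMT_coh_lt_one hroot hreach horth hwp hXr hX c b hcb ω)

end ModelBasic

/-- Theorem 1 of the paper: in an LCMT, for any two distinct,
non-adjacent nodes `a` and `b` there is a node `c` adjacent to `a` with
`d(a, c) ≤ d(a, b)`; under the nondegeneracy assumption that no transfer
function vanishes, the inequality can be made strict. -/
theorem lcmt_incident_node_theorem
    {H : Type*} [NormedAddCommGroup H] [InnerProductSpace ℂ H]
    {V : Type*} [Fintype V]
    (r : V) (par : V → V)
    (hroot : par r = r)
    (hpar : ∀ j, j ≠ r → par j ≠ j)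
    (hreach : ∀ j, ∃ n, par^[n] j = r)
    (h : V → ℝ → ℂ) (ρ : V → ℝ → H)
    (horth : ∀ (ω : ℝ) (a b : V), a ≠ b → ⟪ρ a ω, ρ b ω⟫_ℂ = 0)
    (hwp : ∀ (j : V) (ω : ℝ), ρ j ω ≠ 0)
    (X : V → ℝ → H)
    (hXr : ∀ ω, X r ω = ρ r ω)
    (hX : ∀ j, j ≠ r → ∀ ω, X j ω = h j ω • X (par j) ω + ρ j ω)
    (hmeas : ∀ i j : V, Measurable fun ω => coherence (X i ω) (X j ω))
    (a b : V) (hab : a ≠ b)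
    (hnotadj : ¬ (par a = b ∨ par b = a)) :
    (∃ c : V, c ≠ a ∧ (par a = c ∨ par c = a) ∧
      cohDist (X a) (X c) ≤ cohDist (X a) (X b)) ∧
    ((∀ (m : V) (ω : ℝ), m ≠ r → h m ω ≠ 0) →
      ∃ c : V, c ≠ a ∧ (par a = c ∨ par c = a) ∧
        cohDist (X a) (X c) < cohDist (X a) (X b)) := by
  obtain ⟨c, hca, hadj, hle, hlt⟩ :=
    LCMT_exists_c hroot hpar hreach horth hwp hXr hX a b hab hnotadj
  have hpi : (0:ℝ) < Real.pi := Real.pi_pos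
  -- integrability of the integrands
  have hii : ∀ i j : V, IntervalIntegrable
      (fun ω => 1 - coherence (X i ω) (X j ω)) MeasureTheory.volume
      (-Real.pi) Real.pi := by
    intro i j
    apply IntervalIntegrable.mono_fun'
      (g := fun _ : ℝ => (1 : ℝ)) intervalIntegrable_const
    · exact (measurable_const.sub (hmeas i j)).aestronglyMeasurable
    · apply MeasureTheory.ae_of_all
      intro x
      have h1 := coherence_nonneg (X i x) (X j x)
      have h2 := coherence_le_one (X i x) (X j x)
      simp only [Real.norm_eq_abs]
      rw [abs_le]
      constructor <;> linarith
  have hnn : ∀ i j : V,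
      (0:ℝ) ≤ (1 / (2 * Real.pi)) *
        ∫ ω in (-Real.pi)..Real.pi, (1 - coherence (X i ω) (X j ω)) := by
    intro i j
    apply mul_nonneg (by positivity)
    apply intervalIntegral.integral_nonneg (by linarith)
    intro x _
    have h2 := coherence_le_one (X i x) (X j x)
    linarith
  constructor
  · refine ⟨c, hca, hadj, ?_⟩
    unfold cohDist
    apply Real.sqrt_le_sqrt
    apply mul_le_mul_of_nonneg_left _ (by positivity)
    apply intervalIntegral.integral_mono_on (by linarith) (hii a c) (hii a b)
    intro x _
    have := hle x
    linarith
  · intro hnd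
    refine ⟨c, hca, hadj, ?_⟩
    unfold cohDist
    apply Real.sqrt_lt_sqrt (hnn a c)
    apply mul_lt_mul_of_pos_left _ (by positivity)
    have h0 : 0 < ∫ ω in (-Real.pi)..Real.pi,
        ((1 - coherence (X a ω) (X b ω)) - (1 - coherence (X a ω) (X c ω))) := by
      apply intervalIntegral.intervalIntegral_pos_of_pos_on
        ((hii a b).sub (hii a c))
      · intro x _
        have := hlt hnd x
        linarith
      · linarith
    rw [intervalIntegral.integral_sub (hii a b) (hii a c)] at h0
    linarith
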